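/- Let x₁,...,x_p and y₁,...,y_q be indeterminates, let a(t) = ∏(1 + x_i t), b(t) = ∏(1 + y_j t), and define the sequence (cₙ) by the power series identity Σ cₙ tⁿ = a(t)/b(t). Then the Hankel determinant h_{p,q}(c) = det((c_{i-j+p})_{1≤i,j≤q}) equals the resultant ∏_{i,j} (x_i - y_j). -/

import Mathlib

open MvPolynomial

/-- Extension of a sequence to integer indices by `c_k = 0` for `k < 0`. -/
def czExt {R : Type*} [CommRing R] (c : ℕ → R) : ℤ → R :=
  fun k => if 0 ≤ k then c k.toNat else 0

/-- Koschorke's identity: with indeterminates `x₁,…,x_p, y₁,…,y_q`,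
`a(t) = ∏(1 + xᵢt)`, `b(t) = ∏(1 + yⱼt)`, and `(cₙ)` defined by
`Σ cₙ tⁿ = a(t)/b(t)`, the Hankel determinant `h_{p,q}(c) = det((c_{i-j+p}))`
equals the resultant `∏_{i,j} (xᵢ - yⱼ)`. -/

lemma geom_mul {K : Type*} [Field K] (y : K) :
    (PowerSeries.mk fun n => (-y)^n) *
      ((Polynomial.C y * Polynomial.X + 1 : Polynomial K) : PowerSeries K) = 1 := by
  have hco : ((Polynomial.C y * Polynomial.X + 1 : Polynomial K) : PowerSeries K)
      = PowerSeries.C y * PowerSeries.X + 1 := by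
    simp [Polynomial.coe_add, Polynomial.coe_mul, Polynomial.coe_C, Polynomial.coe_X,
      Polynomial.coe_one]
  rw [hco]
  ext n
  rcases n with _ | n
  · simp
  · have h1 : (PowerSeries.mk fun n => (-y)^n) * (PowerSeries.C y * PowerSeries.X)
        = ((PowerSeries.mk fun n => (-y)^n) * PowerSeries.C y) * PowerSeries.X := by ring
    rw [mul_add, map_add, h1, PowerSeries.coeff_succ_mul_X, mul_one]
    simp [PowerSeries.coeff_mul_C, pow_succ]

lemma natDeg_prod_le {K : Type*} [Field K] {q : ℕ} (yv : Fin q → K) :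
    (∏ j, (Polynomial.C (yv j) * Polynomial.X + 1 : Polynomial K)).natDegree ≤ q := by
  refine le_trans (Polynomial.natDegree_prod_le _ _) ?_
  calc ∑ j : Fin q, (Polynomial.C (yv j) * Polynomial.X + 1).natDegree
      ≤ ∑ _j : Fin q, 1 := by
        refine Finset.sum_le_sum fun j _ => ?_
        refine le_trans (Polynomial.natDegree_add_le _ _) ?_
        simp
        refine le_trans (Polynomial.natDegree_mul_le) ?_
        simp
    _ = q := by simp

lemma natDeg_prod_eq {K : Type*} [Field K] {q : ℕ} (yv : Fin q → K) (hy : ∀ j, yv j ≠ 0) :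
    (∏ j, (Polynomial.C (yv j) * Polynomial.X + 1 : Polynomial K)).natDegree = q := by
  rw [Polynomial.natDegree_prod]
  · have : ∀ j : Fin q, (Polynomial.C (yv j) * Polynomial.X + 1).natDegree = 1 := by
      intro j
      have h1 : (1 : Polynomial K) = Polynomial.C 1 := by simp
      rw [h1, Polynomial.natDegree_add_C, Polynomial.natDegree_C_mul_X _ (hy j)]
    simp [this]
  · intro j _
    intro hc
    have := congrArg (Polynomial.eval 0) hc
    simp at this

lemma reflect_eval {K : Type*} [Field K] {q : ℕ} (yv : Fin q → K) (u : K) (hu : u ≠ 0) :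
    ∑ m ∈ Finset.range (q+1),
      (∏ j, (Polynomial.C (yv j) * Polynomial.X + 1 : Polynomial K)).coeff m * u^((q:ℤ) - m)
      = ∏ j, (u + yv j) := by
  set b : Polynomial K := ∏ j, (Polynomial.C (yv j) * Polynomial.X + 1) with hb
  have hdeg : b.natDegree < q + 1 := Nat.lt_succ_of_le (natDeg_prod_le yv)
  have heval : Polynomial.eval u⁻¹ b = ∑ m ∈ Finset.range (q+1), b.coeff m * (u⁻¹)^m :=
    Polynomial.eval_eq_sum_range' hdeg u⁻¹
  have hprod : ∏ j, (u + yv j) = u^q * Polynomial.eval u⁻¹ b := by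
    have hq : (u:K)^q = ∏ _j : Fin q, u := by simp
    rw [hb, Polynomial.eval_prod, hq, ← Finset.prod_mul_distrib]
    refine Finset.prod_congr rfl fun j _ => ?_
    simp only [Polynomial.eval_add, Polynomial.eval_mul, Polynomial.eval_C, Polynomial.eval_X,
      Polynomial.eval_one]
    field_simp
    ring
  rw [hprod, heval, Finset.mul_sum]
  refine Finset.sum_congr rfl fun m hm => ?_
  have hm' : m ≤ q := Nat.lt_succ_iff.mp (Finset.mem_range.mp hm)
  rw [zpow_sub₀ hu, zpow_natCast, zpow_natCast]
  field_simp
  simp only [one_div, mul_assoc, ← mul_pow, mul_inv_cancel₀ hu, one_pow, mul_one]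

lemma prod_erase_split {M : Type*} [CommMonoid M] {q : ℕ} (g : Fin q → Fin q → M) :
    ∏ k, ∏ l ∈ Finset.univ.erase k, g k l
      = (∏ k, ∏ l ∈ Finset.Ioi k, g k l) * ∏ k, ∏ l ∈ Finset.Ioi k, g l k := by
  have h1 : ∀ k : Fin q, Finset.univ.erase k = Finset.Ioi k ∪ Finset.Iio k := by
    intro k; ext l
    simp only [Finset.mem_erase, Finset.mem_univ, and_true, Finset.mem_union, Finset.mem_Ioi,
      Finset.mem_Iio]
    constructor
    · exact fun h => (lt_or_gt_of_ne h).elim (fun h' => Or.inr h') (fun h' => Or.inl h')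
    · rintro (h | h) <;> omega
  have h2 : ∀ k : Fin q, Disjoint (Finset.Ioi k) (Finset.Iio k) := by
    intro k
    refine Finset.disjoint_left.mpr fun l hl hl' => ?_
    simp only [Finset.mem_Ioi] at hl
    simp only [Finset.mem_Iio] at hl'
    exact absurd (hl.trans hl') (lt_irrefl _)
  have h3 : ∏ k, ∏ l ∈ Finset.Iio k, g k l = ∏ k, ∏ l ∈ Finset.Ioi k, g l k := by
    refine Finset.prod_comm' ?_
    intro x y
    simp only [Finset.mem_univ, true_and, Finset.mem_Iio, Finset.mem_Ioi, and_true]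
  calc ∏ k, ∏ l ∈ Finset.univ.erase k, g k l
      = ∏ k, ((∏ l ∈ Finset.Ioi k, g k l) * ∏ l ∈ Finset.Iio k, g k l) := by
        refine Finset.prod_congr rfl fun k _ => ?_
        rw [h1 k, Finset.prod_union (h2 k)]
    _ = (∏ k, ∏ l ∈ Finset.Ioi k, g k l) * ∏ k, ∏ l ∈ Finset.Iio k, g k l :=
        Finset.prod_mul_distrib
    _ = _ := by rw [h3]



section aux
variable {K : Type*} [Field K]

lemma mul_helper {K : Type*} [Field K] (g bb rest : PowerSeries K) (A : K)
    (hg : g * bb = 1) :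
    (PowerSeries.C A * g) * (bb * rest) = PowerSeries.C A * rest := by
  have : (PowerSeries.C A * g) * (bb * rest) = PowerSeries.C A * ((g * bb) * rest) := by ring
  rw [this, hg, one_mul]

theorem aux_main (p q : ℕ) (xv : Fin p → K) (yv : Fin q → K)
    (hy0 : ∀ k, yv k ≠ 0) (hyinj : Function.Injective yv)
    (c : ℕ → K)
    (h : PowerSeries.mk c *
        ((∏ j, (Polynomial.C (yv j) * Polynomial.X + 1) : Polynomial K) : PowerSeries K)
      = ((∏ i, (Polynomial.C (xv i) * Polynomial.X + 1) : Polynomial K) : PowerSeries K)) :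
    Matrix.det (Matrix.of fun i j : Fin q =>
        czExt c (((i : ℕ) : ℤ) - ((j : ℕ) : ℤ) + (p : ℤ)))
      = ∏ i, ∏ j, (xv i - yv j) := by
  set b : Polynomial K := ∏ j, (Polynomial.C (yv j) * Polynomial.X + 1) with hbdef
  set a : Polynomial K := ∏ i, (Polynomial.C (xv i) * Polynomial.X + 1) with hadef
  have hbne : b ≠ 0 := by
    intro hc
    have := congrArg (Polynomial.eval 0) hc
    rw [hbdef, Polynomial.eval_zero, Polynomial.eval_prod] at this
    simp at this
  have hadeg : a.natDegree ≤ p := natDeg_prod_le xv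
  have hbdeg : b.natDegree = q := natDeg_prod_eq yv hy0
  have hu0 : ∀ k, (-(yv k) : K) ≠ 0 := fun k => neg_ne_zero.mpr (hy0 k)
  set D : Fin q → K := fun k => ∏ l ∈ Finset.univ.erase k, (1 - yv l / yv k) with hDdef
  have hfac : ∀ k l : Fin q, l ≠ k → (1 - yv l / yv k) ≠ 0 := by
    intro k l hlk hc
    have h1 : yv l / yv k = 1 := by linear_combination -hc
    have : yv l = yv k := by
      rw [div_eq_one_iff_eq (hy0 k)] at h1
      exact h1
    exact hlk (hyinj this)
  have hD0 : ∀ k, D k ≠ 0 := by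
    intro k
    rw [hDdef]
    refine Finset.prod_ne_zero_iff.mpr fun l hl => ?_
    exact hfac k l (Finset.mem_erase.mp hl).1
  set A : Fin q → K := fun k => Polynomial.eval (-(yv k)⁻¹) a / D k with hAdef
  set G : Polynomial K :=
    ∑ k, Polynomial.C (A k) * ∏ l ∈ Finset.univ.erase k,
      (Polynomial.C (yv l) * Polynomial.X + 1) with hGdef
  have hGeval : ∀ k, G.eval (-(yv k)⁻¹) = A k * D k := by
    intro k
    rw [hGdef, Polynomial.eval_finset_sum]
    rw [Finset.sum_eq_single k]
    · rw [Polynomial.eval_mul, Polynomial.eval_C, Polynomial.eval_prod]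
      congr 1
      rw [hDdef]
      refine Finset.prod_congr rfl fun l hl => ?_
      simp only [Polynomial.eval_add, Polynomial.eval_mul, Polynomial.eval_C, Polynomial.eval_X,
        Polynomial.eval_one]
      field_simp
      ring
    · intro m _ hmk
      rw [Polynomial.eval_mul, Polynomial.eval_prod]
      have hkm : k ∈ Finset.univ.erase m := Finset.mem_erase.mpr ⟨Ne.symm hmk, Finset.mem_univ k⟩
      rw [Finset.prod_eq_zero hkm, mul_zero]
      simp only [Polynomial.eval_add, Polynomial.eval_mul, Polynomial.eval_C, Polynomial.eval_X,
        Polynomial.eval_one]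
      rw [mul_comm, neg_mul, inv_mul_cancel₀ (hy0 k)]
      ring
    · intro hk
      exact absurd (Finset.mem_univ k) hk
  have hroot : ∀ k, (a - G).eval (-(yv k)⁻¹) = 0 := by
    intro k
    rw [Polynomial.eval_sub, hGeval k, hAdef]
    rw [div_mul_cancel₀ _ (hD0 k), sub_self]
  have hWne : (∏ k, yv k) ≠ 0 := Finset.prod_ne_zero_iff.mpr fun k _ => hy0 k
  have hdvd : b ∣ a - G := by
    set r : Fin q → K := fun j => -(yv j)⁻¹ with hrdef
    have hrinj : Function.Injective r := by
      intro j k hjk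
      rw [hrdef] at hjk
      simp only [neg_inj] at hjk
      exact hyinj (inv_injective hjk)
    have h1 : ∀ j : Fin q, (Polynomial.X - Polynomial.C (r j)) ∣ (a - G) := by
      intro j
      exact Polynomial.dvd_iff_isRoot.mpr (hroot j)
    have h2 : (∏ j, (Polynomial.X - Polynomial.C (r j))) ∣ (a - G) := by
      refine Finset.prod_dvd_of_coprime ?_ fun j _ => h1 j
      exact (Polynomial.pairwise_coprime_X_sub_C hrinj).set_pairwise _
    have h3 : b = Polynomial.C (∏ k, yv k) * ∏ j, (Polynomial.X - Polynomial.C (r j)) := by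
      rw [hbdef, map_prod, ← Finset.prod_mul_distrib]
      refine Finset.prod_congr rfl fun j _ => ?_
      rw [hrdef, mul_sub, ← Polynomial.C_mul]
      simp only [mul_neg, neg_neg]
      rw [mul_inv_cancel₀ (hy0 j)]
      simp only [map_neg, map_one, sub_neg_eq_add]
    obtain ⟨Q, hQ⟩ := h2
    refine ⟨Polynomial.C (∏ k, yv k)⁻¹ * Q, ?_⟩
    rw [h3, hQ]
    rw [← mul_assoc, mul_comm (Polynomial.C (∏ k, yv k)) _, mul_assoc, mul_assoc]
    rw [← mul_assoc (Polynomial.C (∏ k, yv k)) _ _, ← Polynomial.C_mul,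
      mul_inv_cancel₀ hWne]
    simp [mul_comm]
  obtain ⟨P, hP⟩ : ∃ P, a = b * P + G := by
    obtain ⟨P, hP⟩ := hdvd
    exact ⟨P, by rw [← hP]; ring⟩
  have hGdeg : G.natDegree ≤ q - 1 := by
    rw [hGdef]
    refine Polynomial.natDegree_sum_le_of_forall_le _ _ fun k _ => ?_
    refine le_trans (Polynomial.natDegree_mul_le) ?_
    rw [Polynomial.natDegree_C, zero_add]
    refine le_trans (Polynomial.natDegree_prod_le _ _) ?_
    calc ∑ l ∈ Finset.univ.erase k, (Polynomial.C (yv l) * Polynomial.X + 1).natDegree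
        ≤ ∑ _l ∈ Finset.univ.erase k, 1 := by
          refine Finset.sum_le_sum fun l _ => ?_
          refine le_trans (Polynomial.natDegree_add_le _ _) ?_
          simp
          refine le_trans (Polynomial.natDegree_mul_le) ?_
          simp
      _ = q - 1 := by
          rw [Finset.sum_const, smul_eq_mul, mul_one, Finset.card_erase_of_mem (Finset.mem_univ k)]
          simp
  have hPcoeff : ∀ n : ℕ, (p:ℤ) - q < (n:ℤ) → P.coeff n = 0 := by
    intro n hn
    by_cases hP0 : P = 0
    · rw [hP0, Polynomial.coeff_zero]
    refine Polynomial.coeff_eq_zero_of_natDegree_lt ?_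
    have hmul : (b * P).natDegree = q + P.natDegree := by
      rw [Polynomial.natDegree_mul hbne hP0, hbdeg]
    have hsub : (b * P).natDegree ≤ max p (q - 1) := by
      have : b * P = a - G := by rw [hP]; ring
      rw [this]
      exact le_trans (Polynomial.natDegree_sub_le _ _) (max_le_max hadeg hGdeg)
    have h1 : q + P.natDegree ≤ p ∨ q + P.natDegree ≤ q - 1 := by
      rw [hmul] at hsub
      exact le_max_iff.mp hsub
    have h2 : p < n + q := by omega
    rcases h1 with h1 | h1 <;> omega
  have hbPSne : (↑b : PowerSeries K) ≠ 0 := fun hc => hbne (Polynomial.coe_eq_zero_iff.mp hc)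
  have hGcoe : (↑G : PowerSeries K) = ∑ k, (↑(Polynomial.C (A k) * ∏ l ∈ Finset.univ.erase k,
      (Polynomial.C (yv l) * Polynomial.X + 1)) : PowerSeries K) := by
    rw [hGdef, ← Polynomial.coeToPowerSeries.ringHom_apply, map_sum]
    simp only [Polynomial.coeToPowerSeries.ringHom_apply]
  have hseries : PowerSeries.mk c
      = (↑P : PowerSeries K) + ∑ k, (PowerSeries.C (A k)) * PowerSeries.mk (fun n => (-(yv k))^n) := by
    refine mul_right_cancel₀ hbPSne ?_
    rw [h]
    have hterm : ∀ k : Fin q, ((PowerSeries.C (A k)) * PowerSeries.mk (fun n => (-(yv k))^n))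
          * (↑b : PowerSeries K)
        = (↑(Polynomial.C (A k) * ∏ l ∈ Finset.univ.erase k,
            (Polynomial.C (yv l) * Polynomial.X + 1)) : PowerSeries K) := by
      intro k
      have hb1 : b = (Polynomial.C (yv k) * Polynomial.X + 1)
          * ∏ l ∈ Finset.univ.erase k, (Polynomial.C (yv l) * Polynomial.X + 1) := by
        rw [hbdef, ← Finset.mul_prod_erase Finset.univ _ (Finset.mem_univ k)]
      rw [hb1, Polynomial.coe_mul, mul_helper _ _ _ _ (geom_mul (yv k)),
        Polynomial.coe_mul, Polynomial.coe_C]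
    rw [add_mul, Finset.sum_mul, Finset.sum_congr rfl fun k _ => hterm k]
    rw [← hGcoe, hP, Polynomial.coe_add, Polynomial.coe_mul]
    ring
  have hser : ∀ n : ℕ, c n = P.coeff n + ∑ k, A k * (-(yv k))^n := by
    intro n
    have := congrArg (PowerSeries.coeff n) hseries
    rw [PowerSeries.coeff_mk, map_add, map_sum, Polynomial.coeff_coe] at this
    simpa [PowerSeries.coeff_C_mul, PowerSeries.coeff_mk] using this
  have hrec1 : ∀ n : ℤ, (p:ℤ) < n →
      ∑ m ∈ Finset.range (q+1), b.coeff m * czExt c (n - m) = 0 := by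
    intro n hn
    have hn0 : 0 ≤ n := le_trans (Int.ofNat_nonneg p) (le_of_lt hn)
    set N : ℕ := n.toNat with hNdef
    have hN : (N : ℤ) = n := Int.toNat_of_nonneg hn0
    have hNp : p < N := by omega
    have hcoeffa : (PowerSeries.coeff N) (↑a : PowerSeries K) = 0 := by
      rw [Polynomial.coeff_coe]
      exact Polynomial.coeff_eq_zero_of_natDegree_lt (lt_of_le_of_lt hadeg hNp)
    have hconv : ∑ m ∈ Finset.range (N+1), c (N - m) * b.coeff m = 0 := by
      have h1 := congrArg (PowerSeries.coeff N) h
      rw [PowerSeries.coeff_mul, hcoeffa] at h1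
      rw [Finset.Nat.sum_antidiagonal_eq_sum_range_succ_mk] at h1
      simp only [PowerSeries.coeff_mk, Polynomial.coeff_coe] at h1
      rw [← h1, ← Finset.sum_range_reflect]
      refine Finset.sum_congr rfl fun m hm => ?_
      have hm' : m ≤ N := Nat.lt_succ_iff.mp (Finset.mem_range.mp hm)
      have : N + 1 - 1 - m = N - m := by omega
      rw [this]
      have : N - (N - m) = m := by omega
      rw [this]
    set M : ℕ := max q N with hMdef
    have hstep1 : ∑ m ∈ Finset.range (q+1), b.coeff m * czExt c (n - m)
        = ∑ m ∈ Finset.range (M+1), b.coeff m * czExt c (n - m) := by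
      refine Finset.sum_subset ?_ ?_
      · exact Finset.range_subset_range.mpr (by omega)
      · intro m _ hm
        have : q < m := by
          have := Finset.mem_range.not.mp hm
          omega
        rw [Polynomial.coeff_eq_zero_of_natDegree_lt (by omega : b.natDegree < m), zero_mul]
    have hstep2 : ∑ m ∈ Finset.range (M+1), b.coeff m * czExt c (n - m)
        = ∑ m ∈ Finset.range (N+1), b.coeff m * czExt c (n - m) := by
      symm
      refine Finset.sum_subset ?_ ?_
      · exact Finset.range_subset_range.mpr (by omega)
      · intro m _ hm
        have hNm : N < m := by
          have := Finset.mem_range.not.mp hm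
          omega
        have : czExt c (n - m) = 0 := by
          rw [czExt, if_neg (by omega)]
        rw [this, mul_zero]
    have hstep3 : ∑ m ∈ Finset.range (N+1), b.coeff m * czExt c (n - m)
        = ∑ m ∈ Finset.range (N+1), c (N - m) * b.coeff m := by
      refine Finset.sum_congr rfl fun m hm => ?_
      have hm' : m ≤ N := Nat.lt_succ_iff.mp (Finset.mem_range.mp hm)
      have h0 : (0:ℤ) ≤ n - m := by omega
      have h1 : (n - (m:ℤ)).toNat = N - m := by omega
      rw [czExt, if_pos h0, h1, mul_comm]
    rw [hstep1, hstep2, hstep3, hconv]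
  have hrec2 : ∀ n : ℤ,
      ∑ m ∈ Finset.range (q+1), b.coeff m * (∑ k, A k * (-(yv k))^(n - (m:ℤ))) = 0 := by
    intro n
    have hswap : ∑ m ∈ Finset.range (q+1), b.coeff m * (∑ k, A k * (-(yv k))^(n - (m:ℤ)))
        = ∑ k, ∑ m ∈ Finset.range (q+1), b.coeff m * (A k * (-(yv k))^(n - (m:ℤ))) := by
      simp only [Finset.mul_sum]
      exact Finset.sum_comm
    rw [hswap]
    refine Finset.sum_eq_zero fun k _ => ?_
    have inner : ∑ m ∈ Finset.range (q+1), b.coeff m * (A k * (-(yv k))^(n - (m:ℤ)))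
        = A k * ((-(yv k))^(n - (q:ℤ))
            * ∑ m ∈ Finset.range (q+1), b.coeff m * (-(yv k))^((q:ℤ) - m)) := by
      rw [Finset.mul_sum, Finset.mul_sum]
      refine Finset.sum_congr rfl fun m hm => ?_
      have hz : (-(yv k))^(n - (m:ℤ)) = (-(yv k))^(n - (q:ℤ)) * (-(yv k))^((q:ℤ) - m) := by
        rw [← zpow_add₀ (hu0 k)]
        congr 1
        ring
      rw [hz]
      ring
    have hrefl := reflect_eval yv (-(yv k)) (hu0 k)
    rw [← hbdef] at hrefl
    rw [inner, hrefl, Finset.prod_eq_zero (Finset.mem_univ k) (by ring : -yv k + yv k = 0)]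
    ring
  have hbq : b.coeff q ≠ 0 := by
    have : b.coeff q = b.leadingCoeff := by rw [Polynomial.leadingCoeff, hbdeg]
    rw [this]
    exact Polynomial.leadingCoeff_ne_zero.mpr hbne
  have hkey0 : ∀ n : ℤ, 0 ≤ n → (p:ℤ) - q < n → czExt c n = ∑ k, A k * (-(yv k))^n := by
    intro n hn0 hn
    rw [czExt, if_pos hn0]
    have hcast : ((n.toNat : ℤ)) = n := Int.toNat_of_nonneg hn0
    rw [hser n.toNat, hPcoeff n.toNat (by omega), zero_add]
    refine Finset.sum_congr rfl fun k _ => ?_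
    rw [← zpow_natCast (-yv k) n.toNat, hcast]
  have hkeyneg : ∀ N : ℕ, ∀ n : ℤ, (p:ℤ) - q < n → -(N:ℤ) ≤ n →
      czExt c n = ∑ k, A k * (-(yv k))^n := by
    intro N
    induction N with
    | zero => intro n h1 h2; exact hkey0 n (by omega) h1
    | succ N ih =>
      intro n h1 h2
      by_cases hn : -(N:ℤ) ≤ n
      · exact ih n h1 hn
      push_neg at hn
      have hneq : n = -((N:ℤ)+1) := by omega
      have hplt : (p:ℤ) < n + q := by omega
      have e1 := hrec1 (n + q) hplt
      have e2 := hrec2 (n + q)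
      have e3 : ∑ m ∈ Finset.range (q+1),
          b.coeff m * (czExt c (n + q - m) - ∑ k, A k * (-(yv k))^(n + q - (m:ℤ))) = 0 := by
        have : ∀ m ∈ Finset.range (q+1),
            b.coeff m * (czExt c (n + q - m) - ∑ k, A k * (-(yv k))^(n + q - (m:ℤ)))
            = b.coeff m * czExt c (n + q - m)
              - b.coeff m * (∑ k, A k * (-(yv k))^(n + q - (m:ℤ))) := fun m _ => by ring
        rw [Finset.sum_congr rfl this, Finset.sum_sub_distrib, e1, e2, sub_zero]
      have e4 : ∑ m ∈ Finset.range (q+1),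
          b.coeff m * (czExt c (n + q - m) - ∑ k, A k * (-(yv k))^(n + q - (m:ℤ)))
          = b.coeff q * (czExt c n - ∑ k, A k * (-(yv k))^n) := by
        rw [Finset.sum_eq_single q]
        · have hq : n + (q:ℤ) - q = n := by ring
          rw [hq]
        · intro m hm hmq
          have hmlt : m < q := by
            have := Finset.mem_range.mp hm
            omega
          have hih : czExt c (n + q - m) = ∑ k, A k * (-(yv k))^(n + q - (m:ℤ)) := by
            refine ih (n + q - m) (by omega) (by omega)
          rw [hih, sub_self, mul_zero]
        · intro hq
          exact absurd (Finset.self_mem_range_succ q) hq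
      rw [e4] at e3
      have := mul_eq_zero.mp e3
      rcases this with hbad | hgood
      · exact absurd hbad hbq
      · exact sub_eq_zero.mp hgood
  have hkey : ∀ n : ℤ, (p:ℤ) - q < n → czExt c n = ∑ k, A k * (-(yv k))^n := by
    intro n hn
    exact hkeyneg ((-n).toNat) n hn (by omega)
  have hmat : (Matrix.of fun i j : Fin q =>
        czExt c (((i : ℕ) : ℤ) - ((j : ℕ) : ℤ) + (p : ℤ)))
      = (Matrix.vandermonde (fun k => -(yv k))).transpose
        * Matrix.diagonal (fun k => A k * (-(yv k)) ^ p)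
        * Matrix.vandermonde (fun k => (-(yv k))⁻¹) := by
    refine Matrix.ext fun i j => ?_
    have hj : (j:ℕ) < q := j.isLt
    have hidx : ((p:ℤ) - q) < ((i:ℕ):ℤ) - ((j:ℕ):ℤ) + p := by omega
    have hlhs : (Matrix.of fun i j : Fin q =>
        czExt c (((i : ℕ) : ℤ) - ((j : ℕ) : ℤ) + (p : ℤ))) i j
        = ∑ k, A k * (-(yv k))^(((i:ℕ):ℤ) - ((j:ℕ):ℤ) + (p:ℤ)) := by
      rw [Matrix.of_apply]
      exact hkey _ hidx
    rw [hlhs]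
    have hrhs : ((Matrix.vandermonde (fun k => -(yv k))).transpose
        * Matrix.diagonal (fun k => A k * (-(yv k)) ^ p)
        * Matrix.vandermonde (fun k => (-(yv k))⁻¹)) i j
        = ∑ k, ((-(yv k))^((i:ℕ)) * (A k * (-(yv k))^p)) * ((-(yv k))⁻¹)^((j:ℕ)) := by
      rw [Matrix.mul_apply]
      refine Finset.sum_congr rfl fun k _ => ?_
      rw [Matrix.mul_diagonal, Matrix.transpose_apply, Matrix.vandermonde_apply,
        Matrix.vandermonde_apply]
    rw [hrhs]
    refine Finset.sum_congr rfl fun k _ => ?_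
    have hz : (-(yv k))^(((i:ℕ):ℤ) - ((j:ℕ):ℤ) + (p:ℤ))
        = (-(yv k))^((i:ℕ)) * (-(yv k))^p * ((-(yv k))^((j:ℕ)))⁻¹ := by
      rw [show (((i:ℕ):ℤ) - ((j:ℕ):ℤ) + (p:ℤ)) = ((i:ℕ):ℤ) + ((p:ℕ):ℤ) - ((j:ℕ):ℤ) from by
        ring]
      rw [zpow_sub₀ (hu0 k), zpow_add₀ (hu0 k), zpow_natCast, zpow_natCast, zpow_natCast,
        div_eq_mul_inv]
    rw [hz, inv_pow]
    ring
  rw [hmat, Matrix.det_mul, Matrix.det_mul, Matrix.det_transpose, Matrix.det_vandermonde,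
    Matrix.det_vandermonde, Matrix.det_diagonal]
  set Vkl : K := ∏ k, ∏ l ∈ Finset.Ioi k, (yv k - yv l) with hVkl
  set Vlk : K := ∏ k, ∏ l ∈ Finset.Ioi k, (yv l - yv k) with hVlk
  set W : K := ∏ k, yv k with hW
  set Nv : K := ∏ k, ∏ i, (yv k - xv i) with hNv
  have hyne : ∀ k l : Fin q, k ≠ l → yv k - yv l ≠ 0 := by
    intro k l hkl
    exact sub_ne_zero.mpr fun hc => hkl (hyinj hc)
  have hVklne : Vkl ≠ 0 := by
    rw [hVkl]
    refine Finset.prod_ne_zero_iff.mpr fun k _ => Finset.prod_ne_zero_iff.mpr fun l hl => ?_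
    exact hyne k l (ne_of_lt (Finset.mem_Ioi.mp hl))
  have hVlkne : Vlk ≠ 0 := by
    rw [hVlk]
    refine Finset.prod_ne_zero_iff.mpr fun k _ => Finset.prod_ne_zero_iff.mpr fun l hl => ?_
    exact hyne l k (ne_of_lt (Finset.mem_Ioi.mp hl)).symm
  have hV1 : (∏ k : Fin q, ∏ l ∈ Finset.Ioi k, (-yv l - -yv k)) = Vkl := by
    rw [hVkl]
    exact Finset.prod_congr rfl fun k _ => Finset.prod_congr rfl fun l _ => by ring
  have hWW : (∏ k : Fin q, ∏ l ∈ Finset.Ioi k, (yv k * yv l)) = W^q * W⁻¹ := by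
    have h1 : ∏ k : Fin q, ∏ l ∈ Finset.univ.erase k, yv l
        = (∏ k : Fin q, ∏ l ∈ Finset.Ioi k, yv l) * ∏ k : Fin q, ∏ l ∈ Finset.Ioi k, yv k :=
      prod_erase_split fun _ l => yv l
    have h2 : ∏ k : Fin q, ∏ l ∈ Finset.univ.erase k, yv l = W^q * W⁻¹ := by
      have h3 : ∀ k : Fin q, ∏ l ∈ Finset.univ.erase k, yv l = (yv k)⁻¹ * W := by
        intro k
        rw [hW, ← Finset.mul_prod_erase Finset.univ yv (Finset.mem_univ k), ← mul_assoc,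
          inv_mul_cancel₀ (hy0 k), one_mul]
      rw [Finset.prod_congr rfl fun k _ => h3 k, Finset.prod_mul_distrib,
        Finset.prod_const, Finset.card_univ, Fintype.card_fin, Finset.prod_inv_distrib, ← hW]
      ring
    rw [Finset.prod_congr rfl fun k _ => Finset.prod_mul_distrib, Finset.prod_mul_distrib]
    rw [h1] at h2
    rw [← h2]
    ring
  have hV2 : (∏ k : Fin q, ∏ l ∈ Finset.Ioi k, ((-yv l)⁻¹ - (-yv k)⁻¹))
      = Vlk * (W^q * W⁻¹)⁻¹ := by
    have h1 : ∀ k l : Fin q, (-yv l)⁻¹ - (-yv k)⁻¹ = (yv l - yv k) * (yv k * yv l)⁻¹ := by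
      intro k l
      have hk := hy0 k
      have hl := hy0 l
      rw [inv_neg, inv_neg, neg_sub_neg, inv_sub_inv hk hl, div_eq_mul_inv]
    rw [Finset.prod_congr rfl fun k _ => Finset.prod_congr rfl fun l _ => h1 k l]
    rw [Finset.prod_congr rfl fun k (_ : k ∈ Finset.univ) => Finset.prod_mul_distrib,
      Finset.prod_mul_distrib, ← hVlk]
    congr 1
    calc ∏ k : Fin q, ∏ l ∈ Finset.Ioi k, (yv k * yv l)⁻¹
        = ∏ k : Fin q, (∏ l ∈ Finset.Ioi k, (yv k * yv l))⁻¹ :=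
          Finset.prod_congr rfl fun k _ => Finset.prod_inv_distrib _
      _ = (∏ k : Fin q, ∏ l ∈ Finset.Ioi k, (yv k * yv l))⁻¹ := Finset.prod_inv_distrib _
      _ = (W^q * W⁻¹)⁻¹ := by rw [hWW]
  set Ek : Fin q → K := fun k => ∏ l ∈ Finset.univ.erase k, (yv k - yv l) with hEkdef
  have hEkne : ∀ k, Ek k ≠ 0 := by
    intro k
    simp only [hEkdef]
    refine Finset.prod_ne_zero_iff.mpr fun l hl => ?_
    exact hyne k l (Ne.symm (Finset.mem_erase.mp hl).1)
  have hEprod : ∏ k, Ek k = Vkl * Vlk := by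
    simp only [hEkdef, hVkl, hVlk]
    exact prod_erase_split fun k l => yv k - yv l
  have hevala : ∀ k, Polynomial.eval (-(yv k)⁻¹) a = (∏ i, (yv k - xv i)) * ((yv k)⁻¹)^p := by
    intro k
    rw [hadef, Polynomial.eval_prod]
    have hpc : ((yv k)⁻¹)^p = ∏ _i : Fin p, (yv k)⁻¹ := by
      rw [Finset.prod_const, Finset.card_univ, Fintype.card_fin]
    rw [hpc, ← Finset.prod_mul_distrib]
    refine Finset.prod_congr rfl fun i _ => ?_
    simp only [Polynomial.eval_add, Polynomial.eval_mul, Polynomial.eval_C, Polynomial.eval_X,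
      Polynomial.eval_one]
    have hk := hy0 k
    field_simp
    ring
  have hDk : ∀ k, D k = Ek k * ((yv k)⁻¹)^(q-1) := by
    intro k
    have hqc : ((yv k)⁻¹)^(q-1) = ∏ _l ∈ Finset.univ.erase k, (yv k)⁻¹ := by
      rw [Finset.prod_const, Finset.card_erase_of_mem (Finset.mem_univ k), Finset.card_univ,
        Fintype.card_fin]
    simp only [hDdef, hEkdef]
    rw [hqc, ← Finset.prod_mul_distrib]
    refine Finset.prod_congr rfl fun l hl => ?_
    have hk := hy0 k
    field_simp
  have hAk : ∀ k, A k * (-yv k)^p * Ek k = (-1:K)^p * (∏ i, (yv k - xv i)) * (yv k)^(q-1) := by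
    intro k
    simp only [hAdef]
    rw [hevala k, hDk k, neg_pow]
    have hk := hy0 k
    have hEk := hEkne k
    field_simp
    simp only [one_div, mul_assoc, ← mul_pow, mul_inv_cancel₀ hk, inv_mul_cancel₀ hk, one_pow,
      mul_one]
  have hprodA : ∏ k, (A k * (-yv k)^p)
      = ((-1:K)^p)^q * Nv * W^(q-1) * (Vkl * Vlk)⁻¹ := by
    have h1 : ∏ k, (A k * (-yv k)^p * Ek k) = ((-1:K)^p)^q * Nv * W^(q-1) := by
      rw [Finset.prod_congr rfl fun k _ => hAk k, Finset.prod_mul_distrib,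
        Finset.prod_mul_distrib, Finset.prod_const, Finset.card_univ, Fintype.card_fin,
        Finset.prod_pow, ← hNv, ← hW]
    have h2 : ∏ k, (A k * (-yv k)^p * Ek k) = (∏ k, (A k * (-yv k)^p)) * (Vkl * Vlk) := by
      rw [Finset.prod_mul_distrib, hEprod]
    rw [h2] at h1
    exact (eq_mul_inv_iff_mul_eq₀ (mul_ne_zero hVklne hVlkne)).mpr h1
  have hWq : W^q * W⁻¹ = W^(q-1) := by
    rcases Nat.eq_zero_or_pos q with hq | hq
    · subst hq
      have hW1 : W = 1 := by
        rw [hW, Finset.univ_eq_empty, Finset.prod_empty]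
      rw [hW1]
      simp
    · have hq1 : q - 1 + 1 = q := by omega
      calc W^q * W⁻¹ = W^(q-1) * W * W⁻¹ := by rw [← pow_succ, hq1]
        _ = W^(q-1) * (W * W⁻¹) := by ring
        _ = W^(q-1) := by rw [mul_inv_cancel₀ hWne, mul_one]
  have hsign : ∏ i : Fin p, ∏ j : Fin q, (xv i - yv j) = ((-1:K)^p)^q * Nv := by
    calc ∏ i : Fin p, ∏ j : Fin q, (xv i - yv j)
        = ∏ i : Fin p, ∏ j : Fin q, ((-1) * (yv j - xv i)) :=
          Finset.prod_congr rfl fun i _ => Finset.prod_congr rfl fun j _ => by ring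
      _ = (∏ _i : Fin p, ∏ _j : Fin q, (-1:K)) * ∏ i : Fin p, ∏ j : Fin q, (yv j - xv i) := by
          rw [← Finset.prod_mul_distrib]
          exact Finset.prod_congr rfl fun i _ => Finset.prod_mul_distrib
      _ = ((-1:K)^p)^q * Nv := by
          congr 1
          · rw [Finset.prod_const, Finset.prod_const, Finset.card_univ, Finset.card_univ,
              Fintype.card_fin, Fintype.card_fin, ← pow_mul, ← pow_mul, mul_comm]
          · rw [hNv]
            exact Finset.prod_comm
  rw [hV1, hprodA, hV2, hWq, hsign]
  field_simp

end aux

lemma ps_map_coe {R S : Type*} [CommSemiring R] [CommSemiring S] (f : R →+* S)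
    (p : Polynomial R) :
    PowerSeries.map f (↑p : PowerSeries R) = (↑(p.map f) : PowerSeries S) := by
  ext n
  rw [PowerSeries.coeff_map, Polynomial.coeff_coe, Polynomial.coeff_coe, Polynomial.coeff_map]

theorem stmt_12 (p q : ℕ)
    (c : ℕ → MvPolynomial (Fin p ⊕ Fin q) ℚ)
    (h : PowerSeries.mk c *
        ((∏ j : Fin q, (Polynomial.C (X (Sum.inr j)) * Polynomial.X + 1) :
          Polynomial (MvPolynomial (Fin p ⊕ Fin q) ℚ)) : PowerSeries (MvPolynomial (Fin p ⊕ Fin q) ℚ))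
      = ((∏ i : Fin p, (Polynomial.C (X (Sum.inl i)) * Polynomial.X + 1) :
          Polynomial (MvPolynomial (Fin p ⊕ Fin q) ℚ)) : PowerSeries (MvPolynomial (Fin p ⊕ Fin q) ℚ))) :
    Matrix.det (Matrix.of fun i j : Fin q =>
        czExt c (((i : ℕ) : ℤ) - ((j : ℕ) : ℤ) + (p : ℤ)))
      = ∏ i : Fin p, ∏ j : Fin q, (X (Sum.inl i) - X (Sum.inr j)) := by
  let K := FractionRing (MvPolynomial (Fin p ⊕ Fin q) ℚ)
  let φ : MvPolynomial (Fin p ⊕ Fin q) ℚ →+* K :=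
    algebraMap (MvPolynomial (Fin p ⊕ Fin q) ℚ) K
  have hinj : Function.Injective φ :=
    IsFractionRing.injective (MvPolynomial (Fin p ⊕ Fin q) ℚ) K
  set xv : Fin p → K := fun i => φ (X (Sum.inl i)) with hxv
  set yv : Fin q → K := fun j => φ (X (Sum.inr j)) with hyv
  have hy0 : ∀ k, yv k ≠ 0 := by
    intro k
    simp only [hyv]
    rw [map_ne_zero_iff φ hinj]
    exact MvPolynomial.X_ne_zero _
  have hyinj : Function.Injective yv := by
    intro j k hjk
    simp only [hyv] at hjk
    have := MvPolynomial.X_injective (hinj hjk)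
    exact Sum.inr_injective this
  have h' : PowerSeries.mk (fun n => φ (c n)) *
        ((∏ j, (Polynomial.C (yv j) * Polynomial.X + 1) : Polynomial K) : PowerSeries K)
      = ((∏ i, (Polynomial.C (xv i) * Polynomial.X + 1) : Polynomial K) : PowerSeries K) := by
    have hmapmk : PowerSeries.map φ (PowerSeries.mk c) = PowerSeries.mk (fun n => φ (c n)) := by
      ext n
      rw [PowerSeries.coeff_map, PowerSeries.coeff_mk, PowerSeries.coeff_mk]
    have hb : (∏ j : Fin q, (Polynomial.C (X (Sum.inr j)) * Polynomial.X + 1) :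
        Polynomial (MvPolynomial (Fin p ⊕ Fin q) ℚ)).map φ = ∏ j, (Polynomial.C (yv j) * Polynomial.X + 1) := by
      rw [Polynomial.map_prod]
      refine Finset.prod_congr rfl fun j _ => ?_
      rw [Polynomial.map_add, Polynomial.map_mul, Polynomial.map_C, Polynomial.map_X,
        Polynomial.map_one]
    have ha : (∏ i : Fin p, (Polynomial.C (X (Sum.inl i)) * Polynomial.X + 1) :
        Polynomial (MvPolynomial (Fin p ⊕ Fin q) ℚ)).map φ = ∏ i, (Polynomial.C (xv i) * Polynomial.X + 1) := by
      rw [Polynomial.map_prod]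
      refine Finset.prod_congr rfl fun i _ => ?_
      rw [Polynomial.map_add, Polynomial.map_mul, Polynomial.map_C, Polynomial.map_X,
        Polynomial.map_one]
    have := congrArg (PowerSeries.map φ) h
    rw [map_mul, hmapmk, ps_map_coe, ps_map_coe, hb, ha] at this
    exact this
  have hdetK := aux_main p q xv yv hy0 hyinj (fun n => φ (c n)) h'
  apply hinj
  rw [RingHom.map_det]
  have hMap : φ.mapMatrix (Matrix.of fun i j : Fin q =>
        czExt c (((i : ℕ) : ℤ) - ((j : ℕ) : ℤ) + (p : ℤ)))
      = Matrix.of fun i j : Fin q =>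
        czExt (fun n => φ (c n)) (((i : ℕ) : ℤ) - ((j : ℕ) : ℤ) + (p : ℤ)) := by
    refine Matrix.ext fun i j => ?_
    simp only [RingHom.mapMatrix_apply, Matrix.map_apply, Matrix.of_apply, czExt]
    rw [apply_ite φ, map_zero]
  rw [hMap, hdetK, map_prod]
  refine Finset.prod_congr rfl fun i _ => ?_
  rw [map_prod]
  refine Finset.prod_congr rfl fun j _ => ?_
  rw [map_sub]
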